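/- Let e be a centered multivariate Gaussian random vector on ℝⁿ with covariance matrix Σ, let h₁, …, h_m ∈ ℝⁿ, and let p ∈ (0, 1). Then the polytopic set R = {e : h_jᵀ e ≤ Φ⁻¹(1 − (1−p)/m) · √(h_jᵀ Σ h_j) for all j = 1, …, m} satisfies Pr(e ∈ R) ≥ p; i.e., R is a probabilistic reachable set of probability level p for e. -/

import Mathlib

open MeasureTheory ProbabilityTheory Matrix

/-- A measure `ν` on `ι → ℝ` is a multivariate Gaussian with mean `m` and covariance `S`
if it is the law of `m + A z` where `z` is a standard Gaussian vector and `A Aᵀ = S`. -/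
def IsMvGaussian {ι : Type*} [Fintype ι] (ν : Measure (ι → ℝ))
    (m : ι → ℝ) (S : Matrix ι ι ℝ) : Prop :=
  ∃ (k : ℕ) (A : Matrix ι (Fin k) ℝ), A * A.transpose = S ∧
    ν = Measure.map (fun z => m + A.mulVec z)
      (Measure.pi fun _ : Fin k => gaussianReal 0 1)

/-- The cumulative distribution function of the standard normal distribution. -/
noncomputable def stdNormalCDF : ℝ → ℝ := fun x => cdf (gaussianReal 0 1) x

/-- The quantile function `Φ⁻¹` of the standard normal distribution. -/
noncomputable def stdNormalQuantile (p : ℝ) : ℝ := sInf {x : ℝ | p ≤ stdNormalCDF x}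

open Real
open scoped ENNReal NNReal



lemma gauss_conv_pdf {a b : ℝ≥0} (ha : a ≠ 0) (hb : b ≠ 0) (y : ℝ) :
    Integrable (fun x => gaussianPDFReal 0 a x * gaussianPDFReal 0 b (y - x)) ∧
    ∫ x, gaussianPDFReal 0 a x * gaussianPDFReal 0 b (y - x) = gaussianPDFReal 0 (a + b) y := by
  have hπ : (0:ℝ) < π := Real.pi_pos
  have hA : (0:ℝ) < a := NNReal.coe_pos.mpr (pos_iff_ne_zero.mpr ha)
  have hB : (0:ℝ) < b := NNReal.coe_pos.mpr (pos_iff_ne_zero.mpr hb)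
  set α : ℝ := (a:ℝ) with hα
  set β : ℝ := (b:ℝ) with hβ
  set γ : ℝ := α + β with hγ
  have hG : 0 < γ := by positivity
  set c : ℝ := γ / (2*α*β) with hc
  have hc0 : 0 < c := by positivity
  set d : ℝ := α * y / γ with hd
  have hα0 : α ≠ 0 := ne_of_gt hA
  have hβ0 : β ≠ 0 := ne_of_gt hB
  have hγ0 : α + β ≠ 0 := by positivity
  set C : ℝ := (√(2*π*α))⁻¹ * (√(2*π*β))⁻¹ * rexp (- y^2/(2*γ)) with hC
  have key : ∀ x, gaussianPDFReal 0 a x * gaussianPDFReal 0 b (y - x)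
      = C * rexp (-c * (x - d)^2) := by
    intro x
    simp only [gaussianPDFReal, sub_zero, hC]
    rw [show (√(2*π*(a:ℝ)))⁻¹ * rexp (- x^2/(2*(a:ℝ))) * ((√(2*π*(b:ℝ)))⁻¹ * rexp (-(y-x)^2/(2*(b:ℝ))))
        = (√(2*π*α))⁻¹ * (√(2*π*β))⁻¹ * (rexp (- x^2/(2*α)) * rexp (-(y-x)^2/(2*β))) by ring]
    rw [mul_assoc ((√(2*π*α))⁻¹ * (√(2*π*β))⁻¹), ← Real.exp_add, ← Real.exp_add]
    congr 1
    congr 1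
    rw [hc, hd, hγ]
    field_simp
    ring
  have hint : Integrable (fun x => C * rexp (-c * (x - d)^2)) := by
    have : Integrable (fun x : ℝ => rexp (-c * x^2)) := integrable_exp_neg_mul_sq hc0
    exact (this.comp_sub_right d).const_mul C
  constructor
  · exact hint.congr (Filter.Eventually.of_forall fun x => (key x).symm)
  · calc ∫ x, gaussianPDFReal 0 a x * gaussianPDFReal 0 b (y - x)
        = ∫ x, C * rexp (-c * (x - d)^2) := by simp_rw [key]
      _ = C * ∫ x, rexp (-c * (x - d)^2) := by rw [integral_const_mul]
      _ = C * ∫ x, rexp (-c * x^2) := by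
            rw [integral_sub_right_eq_self (fun x => rexp (-c * x^2)) d]
      _ = C * √(π / c) := by rw [integral_gaussian]
      _ = gaussianPDFReal 0 (a + b) y := by
            simp only [gaussianPDFReal, sub_zero, hC, NNReal.coe_add, ← hα, ← hβ, ← hγ]
            have h1 : (√(2*π*α))⁻¹ * (√(2*π*β))⁻¹ = (√(2*π*α*(2*π*β)))⁻¹ := by
              rw [Real.sqrt_mul (show (0:ℝ) ≤ 2*π*α by positivity) (2*π*β), mul_inv]
            have h2 : π / c = (2*π*α*(2*π*β)) / (2*π*γ) := by
              rw [hc]; field_simp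
            have h3 : √(2*π*α*(2*π*β)) ≠ 0 := by positivity
            rw [show (√(2*π*α))⁻¹ * (√(2*π*β))⁻¹ * rexp (- y^2/(2*γ)) * √(π/c)
                = (√(2*π*α))⁻¹ * (√(2*π*β))⁻¹ * √(π/c) * rexp (- y^2/(2*γ)) by ring,
              h1, h2, Real.sqrt_div (by positivity)]
            congr 1
            field_simp

lemma gauss_conv_lintegral {a b : ℝ≥0} (ha : a ≠ 0) (hb : b ≠ 0) (y : ℝ) :
    ∫⁻ x, gaussianPDF 0 a x * gaussianPDF 0 b (y - x) = gaussianPDF 0 (a + b) y := by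
  obtain ⟨hint, heq⟩ := gauss_conv_pdf ha hb y
  calc ∫⁻ x, gaussianPDF 0 a x * gaussianPDF 0 b (y - x)
      = ∫⁻ x, ENNReal.ofReal (gaussianPDFReal 0 a x * gaussianPDFReal 0 b (y - x)) := by
        simp_rw [gaussianPDF,
          ENNReal.ofReal_mul (gaussianPDFReal_nonneg 0 a _)]
    _ = ENNReal.ofReal (∫ x, gaussianPDFReal 0 a x * gaussianPDFReal 0 b (y - x)) := by
        rw [← ofReal_integral_eq_lintegral_ofReal hint
          (Filter.Eventually.of_forall fun x =>
            mul_nonneg (gaussianPDFReal_nonneg 0 a _) (gaussianPDFReal_nonneg 0 b _))]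
    _ = gaussianPDF 0 (a + b) y := by rw [heq]; rfl

lemma gaussianReal_conv (a b : ℝ≥0) :
    Measure.map (fun p : ℝ × ℝ => p.1 + p.2) ((gaussianReal 0 a).prod (gaussianReal 0 b))
      = gaussianReal 0 (a + b) := by
  by_cases ha : a = 0
  · subst ha
    rw [gaussianReal_zero_var, Measure.dirac_prod,
      Measure.map_map measurable_add measurable_prodMk_left, zero_add]
    have : ((fun p : ℝ × ℝ => p.1 + p.2) ∘ Prod.mk (0:ℝ)) = id := by
      funext y; simp
    rw [this, Measure.map_id]
  by_cases hb : b = 0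
  · subst hb
    rw [gaussianReal_zero_var, Measure.prod_dirac,
      Measure.map_map measurable_add measurable_prodMk_right, add_zero]
    have : ((fun p : ℝ × ℝ => p.1 + p.2) ∘ (fun x : ℝ => (x, (0:ℝ)))) = id := by
      funext y; simp
    rw [this, Measure.map_id]
  have hab : a + b ≠ 0 := by simp [ha]
  ext s hs
  rw [Measure.map_apply measurable_add hs,
    Measure.prod_apply (measurable_add hs)]
  have h1 : ∀ x : ℝ, gaussianReal 0 b (Prod.mk x ⁻¹' ((fun p : ℝ × ℝ => p.1 + p.2) ⁻¹' s))
      = ∫⁻ y in s, gaussianPDF 0 b (y - x) := by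
    intro x
    have hpre : Prod.mk x ⁻¹' ((fun p : ℝ × ℝ => p.1 + p.2) ⁻¹' s) = (fun y => x + y) ⁻¹' s := rfl
    rw [hpre, ← Measure.map_apply (measurable_const_add x) hs,
      gaussianReal_map_const_add, zero_add, gaussianReal_apply _ hb]
    congr 1 with y
    rw [gaussianPDF, gaussianPDF, gaussianPDFReal_sub, zero_add]
  simp_rw [h1]
  have hinner : Measurable fun p : ℝ × ℝ => gaussianPDF 0 b (p.2 - p.1) :=
    (measurable_gaussianPDF 0 b).comp (measurable_snd.sub measurable_fst)
  have hmeas : Measurable fun x : ℝ => ∫⁻ y in s, gaussianPDF 0 b (y - x) :=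
    Measurable.lintegral_prod_right' hinner
  rw [gaussianReal_of_var_ne_zero 0 ha,
    lintegral_withDensity_eq_lintegral_mul _ (measurable_gaussianPDF 0 a) hmeas]
  have h2 : ∀ x : ℝ, ((gaussianPDF 0 a) * fun x => ∫⁻ y in s, gaussianPDF 0 b (y - x)) x
      = ∫⁻ y in s, gaussianPDF 0 a x * gaussianPDF 0 b (y - x) := by
    intro x
    simp only [Pi.mul_apply]
    exact (lintegral_const_mul (gaussianPDF 0 a x)
      (f := fun y => gaussianPDF 0 b (y - x))
      ((measurable_gaussianPDF 0 b).comp (measurable_id.sub measurable_const))).symm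
  simp_rw [h2]
  rw [lintegral_lintegral_swap
    (((measurable_gaussianPDF 0 a).comp measurable_fst).mul hinner).aemeasurable]
  simp_rw [gauss_conv_lintegral ha hb]
  exact (gaussianReal_apply 0 hab s).symm

lemma map_dot : ∀ (k : ℕ) (v : Fin k → ℝ),
    Measure.map (fun z : Fin k → ℝ => ∑ i, v i * z i)
      (Measure.pi fun _ : Fin k => gaussianReal 0 1)
    = gaussianReal 0 (∑ i, (⟨(v i)^2, sq_nonneg _⟩ : ℝ≥0)) := by
  intro k
  induction k with
  | zero =>
    intro v
    have : (fun z : Fin 0 → ℝ => ∑ i, v i * z i) = fun _ => (0:ℝ) := by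
      funext z; simp
    rw [this, Measure.map_const]
    simp [gaussianReal_zero_var]
    exact (gaussianReal_zero_var 0).symm
  | succ k ih =>
    intro v
    set πk := Measure.pi fun _ : Fin k => gaussianReal 0 1 with hπk
    set e := MeasurableEquiv.piFinSuccAbove (fun _ : Fin (k+1) => ℝ) 0 with he
    have hmp := measurePreserving_piFinSuccAbove (fun _ : Fin (k+1) => gaussianReal 0 1) 0
    set g₁ : ℝ → ℝ := fun x => v 0 * x with hg₁def
    set g₂ : (Fin k → ℝ) → ℝ := fun w => ∑ j : Fin k, v j.succ * w j with hg₂def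
    have hg₁ : Measurable g₁ := measurable_id.const_mul _
    have hg₂ : Measurable g₂ :=
      Finset.measurable_sum _ fun j _ => (measurable_pi_apply j).const_mul _
    set g : ℝ × (Fin k → ℝ) → ℝ := fun q => g₁ q.1 + g₂ q.2 with hgdef
    have hg : Measurable g := (hg₁.comp measurable_fst).add (hg₂.comp measurable_snd)
    have hfe : (fun z : Fin (k+1) → ℝ => ∑ i, v i * z i) = g ∘ e := by
      funext z
      simp only [hgdef, hg₁def, hg₂def, Function.comp_apply, he,
        MeasurableEquiv.piFinSuccAbove_apply, Fin.zero_succAbove, Fin.sum_univ_succ,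
        Fin.insertNthEquiv, Fin.removeNth, Fin.succAbove, Equiv.coe_fn_symm_mk]
      rfl
    have h1 : Measure.map g₁ (gaussianReal 0 1) = gaussianReal 0 ⟨(v 0)^2, sq_nonneg _⟩ := by
      rw [hg₁def]
      have := gaussianReal_map_const_mul (μ := 0) (v := 1) (v 0)
      simp at this; exact this
    calc Measure.map (fun z : Fin (k+1) → ℝ => ∑ i, v i * z i)
          (Measure.pi fun _ : Fin (k+1) => gaussianReal 0 1)
        = Measure.map g (Measure.map e (Measure.pi fun _ : Fin (k+1) => gaussianReal 0 1)) := by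
          rw [hfe, Measure.map_map hg e.measurable]
      _ = Measure.map g ((gaussianReal 0 1).prod πk) := by rw [hmp.map_eq]
      _ = Measure.map (fun p : ℝ × ℝ => p.1 + p.2)
            (Measure.map (Prod.map g₁ g₂) ((gaussianReal 0 1).prod πk)) := by
          rw [Measure.map_map measurable_add (hg₁.prodMap hg₂)]
          rfl
      _ = Measure.map (fun p : ℝ × ℝ => p.1 + p.2)
            ((Measure.map g₁ (gaussianReal 0 1)).prod (Measure.map g₂ πk)) := by
          rw [Measure.map_prod_map _ _ hg₁ hg₂]
      _ = gaussianReal 0 (∑ i : Fin (k+1), (⟨(v i)^2, sq_nonneg _⟩ : ℝ≥0)) := by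
          rw [h1, hπk, ih (fun j => v j.succ)]
          exact (gaussianReal_conv _ _).trans (congrArg (gaussianReal 0)
            (Fin.sum_univ_succ (fun i => (⟨(v i)^2, sq_nonneg _⟩ : ℝ≥0))).symm)

lemma le_cdf_quantile {t : ℝ} (ht0 : 0 < t) (ht1 : t < 1) :
    t ≤ stdNormalCDF (stdNormalQuantile t) := by
  set s : Set ℝ := {x : ℝ | t ≤ stdNormalCDF x} with hs
  have hmono : Monotone stdNormalCDF := monotone_cdf _
  have hne : s.Nonempty := by
    obtain ⟨x, hx⟩ := ((tendsto_cdf_atTop (gaussianReal 0 1)).eventually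
      (eventually_gt_nhds ht1)).exists
    exact ⟨x, le_of_lt hx⟩
  have hbdd : BddBelow s := by
    obtain ⟨x₀, hx₀⟩ := (Filter.eventually_atBot).mp
      ((tendsto_cdf_atBot (gaussianReal 0 1)).eventually (eventually_lt_nhds ht0))
    refine ⟨x₀, fun y hy => ?_⟩
    by_contra hxy
    exact absurd hy (not_le.mpr (hx₀ y (le_of_lt (not_le.mp hxy))))
  have hgt : ∀ x ∈ Set.Ioi (stdNormalQuantile t), t ≤ stdNormalCDF x := by
    intro x hx
    obtain ⟨y, hys, hyx⟩ := (csInf_lt_iff hbdd hne).mp hx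
    exact le_trans hys (hmono hyx.le)
  have htend : Filter.Tendsto stdNormalCDF (nhdsWithin (stdNormalQuantile t) (Set.Ioi (stdNormalQuantile t)))
      (nhds (stdNormalCDF (stdNormalQuantile t))) :=
    ((cdf (gaussianReal 0 1)).right_continuous (stdNormalQuantile t)).mono_left
      (nhdsWithin_mono _ Set.Ioi_subset_Ici_self)
  exact ge_of_tendsto htend (eventually_mem_nhdsWithin.mono hgt)

lemma tail_bound {t : ℝ} (ht0 : 0 < t) (ht1 : t < 1) (s : ℝ≥0) :
    gaussianReal 0 s {x | stdNormalQuantile t * Real.sqrt s < x} ≤ ENNReal.ofReal (1 - t) := by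
  set q := stdNormalQuantile t with hq
  by_cases hs : s = 0
  · subst hs
    rw [gaussianReal_zero_var]
    have : {x : ℝ | q * Real.sqrt ((0:ℝ≥0):ℝ) < x} = Set.Ioi 0 := by
      simp [Set.Ioi]
    rw [this, Measure.dirac_apply' _ measurableSet_Ioi]
    simp
  · have hσ : (0:ℝ) < Real.sqrt s := Real.sqrt_pos.mpr (NNReal.coe_pos.mpr (pos_iff_ne_zero.mpr hs))
    have hmap : Measure.map (fun x => Real.sqrt s * x) (gaussianReal 0 1) = gaussianReal 0 s := by
      rw [gaussianReal_map_const_mul]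
      congr 1
      · simp
      · ext
        simp [Real.sq_sqrt s.coe_nonneg]
    have hset : {x : ℝ | q * Real.sqrt s < x} = Set.Ioi (q * Real.sqrt s) := rfl
    rw [hset, ← hmap, Measure.map_apply (measurable_const_mul _) measurableSet_Ioi]
    have hpre : (fun x => Real.sqrt s * x) ⁻¹' Set.Ioi (q * Real.sqrt s) = Set.Ioi q := by
      ext x
      simp only [Set.mem_preimage, Set.mem_Ioi]
      rw [mul_comm q]
      exact mul_lt_mul_iff_right₀ hσ
    rw [hpre]
    have hIoi : (Set.Ioi q) = (Set.Iic q)ᶜ := by simp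
    rw [hIoi, measure_compl measurableSet_Iic (measure_ne_top _ _), measure_univ,
      ← ofReal_cdf (gaussianReal 0 1) q]
    calc 1 - ENNReal.ofReal (cdf (gaussianReal 0 1) q)
        ≤ 1 - ENNReal.ofReal t := by
          refine tsub_le_tsub_left (ENNReal.ofReal_le_ofReal ?_) 1
          exact le_cdf_quantile ht0 ht1
      _ = ENNReal.ofReal (1 - t) := by
          rw [ENNReal.ofReal_sub 1 ht0.le, ENNReal.ofReal_one]


/-- For a centered Gaussian `e` with covariance `Σ` and half-spaces `h₁, …, h_m`, the
polytope `{e | hⱼᵀ e ≤ Φ⁻¹(1 - (1-p)/m) √(hⱼᵀ Σ hⱼ) ∀ j}` is a probabilistic reachable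
set of probability level `p` (by Boole's inequality). -/
theorem polytope_PRS {n m : ℕ} (hm : 0 < m)
    (S : Matrix (Fin n) (Fin n) ℝ) (hS : S.PosSemidef)
    (ν : Measure (Fin n → ℝ)) (hν : IsMvGaussian ν 0 S)
    (h : Fin m → (Fin n → ℝ)) (p : ℝ) (hp : p ∈ Set.Ioo (0 : ℝ) 1) :
    ENNReal.ofReal p ≤
      ν {e | ∀ j : Fin m, h j ⬝ᵥ e ≤
        stdNormalQuantile (1 - (1 - p) / m) * Real.sqrt (h j ⬝ᵥ S.mulVec (h j))} := by
  obtain ⟨k, A, hAS, hmapν⟩ := hν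
  obtain ⟨hp0, hp1⟩ := hp
  have hm1 : (1:ℝ) ≤ m := Nat.one_le_cast.mpr hm
  have hmpos : (0:ℝ) < m := by linarith
  set ε : ℝ := (1 - p) / m with hε
  have hε0 : 0 < ε := div_pos (by linarith) hmpos
  have hε1 : ε ≤ 1 - p := div_le_self (by linarith) hm1
  set t : ℝ := 1 - ε with ht
  have ht0 : 0 < t := by simp only [ht]; linarith
  have ht1 : t < 1 := by simp only [ht]; linarith
  set q : ℝ := stdNormalQuantile t with hq
  set w : Fin m → Fin k → ℝ := fun j => (h j) ᵥ* A with hw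
  have key1 : ∀ (j : Fin m) (z : Fin k → ℝ), h j ⬝ᵥ A.mulVec z = ∑ i, w j i * z i := by
    intro j z
    rw [Matrix.dotProduct_mulVec]
    simp [hw, dotProduct]
  have key2 : ∀ j : Fin m, h j ⬝ᵥ S.mulVec (h j) = ∑ i, (w j i)^2 := by
    intro j
    rw [← hAS, ← Matrix.mulVec_mulVec, Matrix.dotProduct_mulVec, ← Matrix.mulVec_transpose]
    simp [hw, dotProduct, Matrix.mulVec_transpose, sq]
  -- measurability
  have hdot : ∀ j : Fin m, Measurable fun e : Fin n → ℝ => h j ⬝ᵥ e := by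
    intro j
    exact Finset.measurable_sum _ fun l _ => (measurable_pi_apply l).const_mul _
  set E : Set (Fin n → ℝ) :=
    {e | ∀ j : Fin m, h j ⬝ᵥ e ≤ q * Real.sqrt (h j ⬝ᵥ S.mulVec (h j))} with hE
  have hEeq : E = ⋂ j : Fin m, {e | h j ⬝ᵥ e ≤ q * Real.sqrt (h j ⬝ᵥ S.mulVec (h j))} := by
    ext e; simp [hE]
  have hEmeas : MeasurableSet E := by
    rw [hEeq]
    exact MeasurableSet.iInter fun j => (hdot j) measurableSet_Iic
  have hAmeas : Measurable fun z : Fin k → ℝ => A.mulVec z := by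
    apply measurable_pi_iff.mpr
    intro l
    have h' : (fun z : Fin k → ℝ => (A.mulVec z) l) = fun z => ∑ i, A l i * z i := rfl
    rw [h']
    exact Finset.measurable_sum _ fun i _ => (measurable_pi_apply i).const_mul _
  have hzero : (fun z : Fin k → ℝ => (0 : Fin n → ℝ) + A.mulVec z) = fun z => A.mulVec z := by
    funext z; simp
  rw [hmapν, hzero, Measure.map_apply hAmeas hEmeas]
  set piK : Measure (Fin k → ℝ) := Measure.pi fun _ : Fin k => gaussianReal 0 1 with hpiK
  have hpre : A.mulVec ⁻¹' E
      = {z | ∀ j : Fin m, ∑ i, w j i * z i ≤ q * Real.sqrt (h j ⬝ᵥ S.mulVec (h j))} := by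
    ext z
    simp only [Set.mem_preimage, hE, Set.mem_setOf_eq]
    constructor <;> intro hz j <;> [rw [← key1]; rw [key1]] <;> exact hz j
  rw [hpre]
  set c : Fin m → ℝ := fun j => q * Real.sqrt (h j ⬝ᵥ S.mulVec (h j)) with hc
  set P : Set (Fin k → ℝ) := {z | ∀ j : Fin m, ∑ i, w j i * z i ≤ c j} with hP
  have hsummeas : ∀ j : Fin m, Measurable fun z : Fin k → ℝ => ∑ i, w j i * z i := by
    intro j
    exact Finset.measurable_sum _ fun i _ => (measurable_pi_apply i).const_mul _
  have hPmeas : MeasurableSet P := by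
    have : P = ⋂ j : Fin m, {z | ∑ i, w j i * z i ≤ c j} := by ext z; simp [hP]
    rw [this]
    exact MeasurableSet.iInter fun j => (hsummeas j) measurableSet_Iic
  have hprob : IsProbabilityMeasure piK := by rw [hpiK]; infer_instance
  -- bound on each violation probability
  have hbound : ∀ j : Fin m, piK {z | c j < ∑ i, w j i * z i} ≤ ENNReal.ofReal ε := by
    intro j
    have hset : {z : Fin k → ℝ | c j < ∑ i, w j i * z i}
        = (fun z : Fin k → ℝ => ∑ i, w j i * z i) ⁻¹' {x | c j < x} := rfl
    rw [hset, ← Measure.map_apply (hsummeas j) (by exact measurableSet_Ioi), hpiK, map_dot k (w j)]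
    set σsq : ℝ≥0 := ∑ i, (⟨(w j i)^2, sq_nonneg _⟩ : ℝ≥0) with hσsq
    have hcoe : (σsq : ℝ) = ∑ i, (w j i)^2 := by
      rw [hσsq]; exact NNReal.coe_sum _ _
    have hcj : c j = stdNormalQuantile t * Real.sqrt σsq := by
      show q * Real.sqrt (h j ⬝ᵥ S.mulVec (h j)) = _
      rw [key2 j, ← hcoe, hq]
    rw [hcj]
    have := tail_bound ht0 ht1 σsq
    calc (gaussianReal 0 σsq) {x | stdNormalQuantile t * Real.sqrt σsq < x}
        ≤ ENNReal.ofReal (1 - t) := this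
      _ = ENNReal.ofReal ε := by rw [ht]; ring_nf
  -- union bound
  have hcompl : piK Pᶜ ≤ ENNReal.ofReal (1 - p) := by
    have hPc : Pᶜ = ⋃ j : Fin m, {z | c j < ∑ i, w j i * z i} := by
      ext z; simp [hP, not_le]
    rw [hPc]
    calc piK (⋃ j : Fin m, {z | c j < ∑ i, w j i * z i})
        ≤ ∑ j : Fin m, piK {z | c j < ∑ i, w j i * z i} := measure_iUnion_fintype_le _ _
      _ ≤ ∑ _j : Fin m, ENNReal.ofReal ε := Finset.sum_le_sum fun j _ => hbound j
      _ = m * ENNReal.ofReal ε := by rw [Finset.sum_const, Finset.card_univ, Fintype.card_fin,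
            nsmul_eq_mul]
      _ = ENNReal.ofReal (1 - p) := by
          rw [← ENNReal.ofReal_natCast m, ← ENNReal.ofReal_mul (Nat.cast_nonneg m), hε]
          congr 1
          field_simp
  have hPP : piK P = 1 - piK Pᶜ := by
    have := measure_compl hPmeas.compl (measure_ne_top piK _)
    rw [compl_compl, measure_univ] at this
    rw [this]
  rw [hPP]
  calc ENNReal.ofReal p = 1 - ENNReal.ofReal (1 - p) := by
        rw [← ENNReal.ofReal_one, ← ENNReal.ofReal_sub _ (by linarith : (0:ℝ) ≤ 1 - p)]
        norm_num
    _ ≤ 1 - piK Pᶜ := tsub_le_tsub_left hcompl 1
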